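/- Let K be a quadratic field in which −3 is a square (so K = ℚ(√−3)) and let E be the elliptic curve y² = x³ + 16 over K. Then the torsion subgroup E(K)_tors is isomorphic to ℤ/3ℤ ⊕ ℤ/3ℤ. -/

import Mathlib

/-- The Weierstrass curve `y² = x³ + 16` over `K`, i.e. with coefficients
`a₁ = a₂ = a₃ = a₄ = 0`, `a₆ = 16`. -/
def curveE (K : Type*) [Field K] : WeierstrassCurve K :=
  ⟨0, 0, 0, 0, 16⟩

set_option linter.unusedSectionVars false

open NumberField

open private FermatLastTheoremForThreeGen FermatLastTheoremForThreeGen.Solution' FermatLastTheoremForThreeGen.Solution'.mk FermatLastTheoremForThreeGen.exists_Solution_of_Solution' FermatLastTheoremForThreeGen.Solution.exists_minimal FermatLastTheoremForThreeGen.Solution.exists_Solution_multiplicity_lt FermatLastTheoremForThreeGen.Solution.isMinimal from Mathlib.NumberTheory.FLT.Three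

theorem fltThreeGen' {K : Type*} [Field K] [NumberField K] [IsCyclotomicExtension {3} ℚ K]
    {ζ : K} (hζ : IsPrimitiveRoot ζ ↑(3 : ℕ+)) : FermatLastTheoremForThreeGen hζ := by
  classical
  intro a b c u hc ha hb hcdvd coprime H
  let S' : FermatLastTheoremForThreeGen.Solution' hζ :=
    FermatLastTheoremForThreeGen.Solution'.mk a b c u ha hb hc coprime hcdvd H
  obtain ⟨S, -⟩ := FermatLastTheoremForThreeGen.exists_Solution_of_Solution' S'
  obtain ⟨Smin, hSmin⟩ := S.exists_minimal
  obtain ⟨Sfin, hSfin⟩ := Smin.exists_Solution_multiplicity_lt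
  linarith [hSmin Sfin]


theorem flt3OK_coprime {K : Type*} [Field K] [NumberField K] [IsCyclotomicExtension {3} ℚ K]
    (hGen : ∀ {ζ : K} (hζ : IsPrimitiveRoot ζ ↑(3 : ℕ+)), FermatLastTheoremForThreeGen hζ)
    {a b c : 𝓞 K} (ha : a ≠ 0) (hb : b ≠ 0) (hc : c ≠ 0) (hab : IsCoprime a b)
    (H : a ^ 3 + b ^ 3 = c ^ 3) : False := by
  have hζ := IsCyclotomicExtension.zeta_spec 3 ℚ K
  set η := hζ.toInteger with hη
  set lam := η - 1 with hlam
  have hprime : Prime lam := hζ.zeta_sub_one_prime'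
  have hη3 : η ^ 3 = 1 := hζ.toInteger_cube_eq_one
  have hηne : η ≠ 1 := by
    intro h
    exact hζ.toInteger_isPrimitiveRoot.ne_one (by norm_num) h
  have hquad : η ^ 2 + η + 1 = 0 := by
    have h0 : (η - 1) * (η ^ 2 + η + 1) = 0 := by linear_combination hη3
    rcases mul_eq_zero.mp h0 with h | h
    · exact absurd (sub_eq_zero.mp h) hηne
    · exact h
  have hlamsq : lam ^ 2 = -3 * η := by rw [hlam]; linear_combination hquad
  have h9 : lam ^ 4 * η = 9 := by
    linear_combination (lam ^ 2 * η - 3 * η ^ 2) * hlamsq + 9 * hη3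
  have hηunit : IsUnit η := IsUnit.of_mul_eq_one (η ^ 2) (by linear_combination hη3)
  -- λ⁴ does not divide 3
  have hlam3 : ¬ lam ^ 4 ∣ 3 := by
    rintro ⟨k, hk⟩
    have h99 : lam ^ 4 * η = lam ^ 4 * (lam ^ 4 * k ^ 2) := by
      rw [h9]; linear_combination (3 + lam ^ 4 * k) * hk
    have := mul_left_cancel₀ (pow_ne_zero 4 hprime.ne_zero) h99
    exact hprime.not_unit (isUnit_of_dvd_unit ⟨lam ^ 3 * k ^ 2, by linear_combination this⟩ hηunit)
  have hlam1 : ¬ lam ^ 4 ∣ 1 := fun h ↦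
    hprime.not_unit (isUnit_of_dvd_unit (dvd_pow_self lam (by norm_num) |>.trans h) isUnit_one)
  -- pairwise coprimality
  have hac : IsCoprime a c := by
    have h3 : IsCoprime (a ^ 3) (b ^ 3) := hab.pow
    have h4 : IsCoprime (a ^ 3) (c ^ 3) := by
      have := h3.add_mul_left_right 1
      rwa [mul_one, show b ^ 3 + a ^ 3 = c ^ 3 by linear_combination H] at this
    exact ((IsCoprime.pow_iff (by norm_num) (by norm_num)).mp h4)
  have hbc : IsCoprime b c := by
    have h3 : IsCoprime (b ^ 3) (a ^ 3) := hab.symm.pow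
    have h4 : IsCoprime (b ^ 3) (c ^ 3) := by
      have := h3.add_mul_left_right 1
      rwa [mul_one, show a ^ 3 + b ^ 3 = c ^ 3 by linear_combination H] at this
    exact ((IsCoprime.pow_iff (by norm_num) (by norm_num)).mp h4)
  by_cases hdvd : lam ∣ a * b * c
  · -- λ divides exactly one of a, b, c
    rcases (hprime.dvd_mul.mp hdvd) with hd | hdc
    · rcases hprime.dvd_mul.mp hd with hda | hdb
      · -- λ ∣ a : use (c, -b, a)
        have hnc : ¬ lam ∣ c := fun h ↦ hprime.not_unit (hac.isUnit_of_dvd' hda h)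
        have hnb : ¬ lam ∣ (-b) := fun h ↦
          hprime.not_unit (hab.isUnit_of_dvd' hda (dvd_neg.mp h))
        exact hGen hζ c (-b) a 1 ha hnc hnb hda (hbc.symm.neg_right)
          (by push_cast; linear_combination -H)
      · -- λ ∣ b : use (c, -a, b)
        have hnc : ¬ lam ∣ c := fun h ↦ hprime.not_unit (hbc.isUnit_of_dvd' hdb h)
        have hna : ¬ lam ∣ (-a) := fun h ↦
          hprime.not_unit (hab.symm.isUnit_of_dvd' hdb (dvd_neg.mp h))
        exact hGen hζ c (-a) b 1 hb hnc hna hdb (hac.symm.neg_right)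
          (by push_cast; linear_combination -H)
    · -- λ ∣ c
      have hna : ¬ lam ∣ a := fun h ↦ hprime.not_unit (hac.isUnit_of_dvd' h hdc)
      have hnb : ¬ lam ∣ b := fun h ↦ hprime.not_unit (hbc.isUnit_of_dvd' h hdc)
      exact hGen hζ a b c 1 hc hna hnb hdc hab
        (by push_cast; linear_combination H)
  · -- λ divides none : congruence argument
    have hna : ¬ lam ∣ a := fun h ↦ hdvd ((h.mul_right b).mul_right c)
    have hnb : ¬ lam ∣ b := fun h ↦ hdvd ((h.mul_left a).mul_right c)
    have hnc : ¬ lam ∣ c := fun h ↦ hdvd (h.mul_left _)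
    have Ha := IsCyclotomicExtension.Rat.Three.lambda_pow_four_dvd_cube_sub_one_or_add_one_of_lambda_not_dvd hζ hna
    have Hb := IsCyclotomicExtension.Rat.Three.lambda_pow_four_dvd_cube_sub_one_or_add_one_of_lambda_not_dvd hζ hnb
    have Hc := IsCyclotomicExtension.Rat.Three.lambda_pow_four_dvd_cube_sub_one_or_add_one_of_lambda_not_dvd hζ hnc
    have key : ∀ e₁ e₂ e₃ : 𝓞 K, lam ^ 4 ∣ a ^ 3 - e₁ → lam ^ 4 ∣ b ^ 3 - e₂ →
        lam ^ 4 ∣ c ^ 3 - e₃ → lam ^ 4 ∣ e₃ - e₁ - e₂ := by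
      intro e₁ e₂ e₃ h₁ h₂ h₃
      have := (h₁.add h₂).sub h₃
      have heq : a ^ 3 - e₁ + (b ^ 3 - e₂) - (c ^ 3 - e₃) = e₃ - e₁ - e₂ := by
        linear_combination H
      rwa [heq] at this
    have hsub : ∀ x : 𝓞 K, lam ^ 4 ∣ x ^ 3 + 1 → lam ^ 4 ∣ x ^ 3 - (-1) := by
      intro x h; rwa [sub_neg_eq_add]
    rcases Ha with Ha | Ha <;> rcases Hb with Hb | Hb <;> rcases Hc with Hc | Hc
    · have h := key 1 1 1 Ha Hb Hc; norm_num at h; exact hlam1 h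
    · have h := key 1 1 (-1) Ha Hb (hsub c Hc); norm_num at h; exact hlam3 h
    · have h := key 1 (-1) 1 Ha (hsub b Hb) Hc; norm_num at h; exact hlam1 h
    · have h := key 1 (-1) (-1) Ha (hsub b Hb) (hsub c Hc); norm_num at h; exact hlam1 h
    · have h := key (-1) 1 1 (hsub a Ha) Hb Hc; norm_num at h; exact hlam1 h
    · have h := key (-1) 1 (-1) (hsub a Ha) Hb (hsub c Hc); norm_num at h; exact hlam1 h
    · have h := key (-1) (-1) 1 (hsub a Ha) (hsub b Hb) Hc; norm_num at h; exact hlam3 h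
    · have h := key (-1) (-1) (-1) (hsub a Ha) (hsub b Hb) (hsub c Hc); norm_num at h; exact hlam1 h

theorem flt3OK {K : Type*} [Field K] [NumberField K] [IsCyclotomicExtension {3} ℚ K]
    (hGen : ∀ {ζ : K} (hζ : IsPrimitiveRoot ζ ↑(3 : ℕ+)), FermatLastTheoremForThreeGen hζ)
    {a b c : 𝓞 K} (ha : a ≠ 0) (hb : b ≠ 0) (hc : c ≠ 0) (H : a ^ 3 + b ^ 3 = c ^ 3) :
    False := by
  classical
  haveI : IsPrincipalIdealRing (𝓞 K) := IsCyclotomicExtension.Rat.three_pid K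
  letI : GCDMonoid (𝓞 K) := IsBezout.toGCDDomain (𝓞 K)
  obtain ⟨a', b', haa, hbb, hunit⟩ := extract_gcd a b
  set d := gcd a b with hd
  have hdne : d ≠ 0 := fun h ↦ ha (by rw [haa, h, zero_mul])
  have hdc : d ∣ c := by
    have h3 : d ^ 3 ∣ c ^ 3 := by
      rw [← H, haa, hbb]
      exact ⟨a' ^ 3 + b' ^ 3, by ring⟩
    exact (IsIntegrallyClosed.pow_dvd_pow_iff three_ne_zero).mp h3
  obtain ⟨c', hcc⟩ := hdc
  have ha' : a' ≠ 0 := fun h ↦ ha (by rw [haa, h, mul_zero])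
  have hb' : b' ≠ 0 := fun h ↦ hb (by rw [hbb, h, mul_zero])
  have hc' : c' ≠ 0 := fun h ↦ hc (by rw [hcc, h, mul_zero])
  have H' : a' ^ 3 + b' ^ 3 = c' ^ 3 := by
    have h0 : d ^ 3 * (a' ^ 3 + b' ^ 3) = d ^ 3 * c' ^ 3 := by
      have := H
      rw [haa, hbb, hcc] at this
      linear_combination this
    exact mul_left_cancel₀ (pow_ne_zero 3 hdne) h0
  exact flt3OK_coprime hGen ha' hb' hc' ((gcd_isUnit_iff a' b').mp hunit) H'


theorem flt3K {K : Type*} [Field K] [NumberField K] [IsCyclotomicExtension {3} ℚ K]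
    (hGen : ∀ {ζ : K} (hζ : IsPrimitiveRoot ζ ↑(3 : ℕ+)), FermatLastTheoremForThreeGen hζ)
    {x y : K} (hx : x ≠ 0) (hy : y ≠ 0) (H : x ^ 3 + y ^ 3 = 1) : False := by
  classical
  obtain ⟨d, hd⟩ := IsLocalization.exist_integer_multiples_of_finset
    (nonZeroDivisors (𝓞 K)) ({x, y} : Finset K)
  obtain ⟨a, ha⟩ := hd x (Finset.mem_insert_self x {y})
  obtain ⟨b, hb⟩ := hd y (by simp)
  have hdne : (d : 𝓞 K) ≠ 0 := nonZeroDivisors.coe_ne_zero d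
  have hdK : (algebraMap (𝓞 K) K) (d : 𝓞 K) ≠ 0 := by
    simpa using hdne
  have hsmul : ∀ z : K, (d : 𝓞 K) • z = algebraMap (𝓞 K) K (d : 𝓞 K) * z := fun z ↦
    Algebra.smul_def _ z
  rw [hsmul] at ha hb
  have hane : a ≠ 0 := by
    intro h
    rw [h] at ha
    simp only [map_zero] at ha
    exact hx (by
      have := ha.symm
      rcases mul_eq_zero.mp this with h' | h'
      · exact absurd h' hdK
      · exact h')
  have hbne : b ≠ 0 := by
    intro h
    rw [h] at hb
    simp only [map_zero] at hb
    exact hy (by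
      have := hb.symm
      rcases mul_eq_zero.mp this with h' | h'
      · exact absurd h' hdK
      · exact h')
  -- a^3 + b^3 = d^3 in 𝓞 K
  have Hint : a ^ 3 + b ^ 3 = (d : 𝓞 K) ^ 3 := by
    have hmap : algebraMap (𝓞 K) K (a ^ 3 + b ^ 3) = algebraMap (𝓞 K) K ((d : 𝓞 K) ^ 3) := by
      push_cast [map_add, map_pow, ha, hb]
      ring_nf
      linear_combination (algebraMap (𝓞 K) K (d : 𝓞 K)) ^ 3 * H
    exact RingOfIntegers.coe_injective hmap
  exact flt3OK hGen hane hbne hdne Hint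


open IntermediateField in
theorem cyclo_of_sqrt_neg_three {K : Type*} [Field K] [NumberField K]
    (hK : Module.finrank ℚ K = 2) (h3 : ∃ s : K, s ^ 2 = -3) :
    IsCyclotomicExtension {3} ℚ K := by
  obtain ⟨s, hs⟩ := h3
  set ω : K := (-1 + s) / 2 with hω
  have hchar : (2 : K) ≠ 0 := two_ne_zero
  have h4 : 2 * ω = -1 + s := by
    rw [hω]; field_simp
  have hquad : ω ^ 2 + ω + 1 = 0 := by
    have h40 : (4 : K) * (ω ^ 2 + ω + 1) = 0 := by
      linear_combination (2 * ω + 1 + s) * h4 + hs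
    rcases mul_eq_zero.mp h40 with h | h
    · norm_num at h
    · exact h
  have hω3 : ω ^ 3 = 1 := by linear_combination (ω - 1) * hquad
  have hωne : ω ≠ 1 := by
    intro h
    rw [h] at hquad
    norm_num at hquad
  have hprim : IsPrimitiveRoot ω 3 := by
    refine ⟨hω3, fun l hl ↦ ?_⟩
    have h0 : ω ^ (l % 3) = 1 := by
      conv_lhs at hl => rw [← Nat.div_add_mod l 3, pow_add, pow_mul, hω3, one_pow, one_mul]
      exact hl
    have hlt : l % 3 = 0 ∨ l % 3 = 1 ∨ l % 3 = 2 := by omega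
    rcases hlt with h | h | h
    · exact Nat.dvd_of_mod_eq_zero h
    · rw [h] at h0
      exact absurd (by simpa using h0) hωne
    · exfalso
      rw [h] at h0
      have h2 : ω ^ 2 = 1 := by simpa using h0
      have hw2 : ω = -2 := by linear_combination hquad - h2
      rw [hw2] at h2
      norm_num at h2
  have hint : IsIntegral ℚ ω := IsIntegral.of_finite ℚ ω
  -- ℚ⟮ω⟯ = ⊤
  have hne1 : Module.finrank ℚ ℚ⟮ω⟯ ≠ 1 := by
    intro h1
    rw [IntermediateField.finrank_eq_one_iff] at h1
    have : ω ∈ (⊥ : IntermediateField ℚ K) := h1 ▸ IntermediateField.mem_adjoin_simple_self ℚ ω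
    rw [IntermediateField.mem_bot] at this
    obtain ⟨q, hq⟩ := this
    rw [eq_ratCast] at hq
    have hqk : (q : K) ^ 2 + (q : K) + 1 = 0 := by rw [hq]; exact hquad
    have hcast : ((q ^ 2 + q + 1 : ℚ) : K) = 0 := by push_cast; exact hqk
    have hq0 : (q ^ 2 + q + 1 : ℚ) = 0 := by exact_mod_cast hcast
    nlinarith [sq_nonneg (2 * q + 1)]
  have hdvd : Module.finrank ℚ ℚ⟮ω⟯ ∣ 2 := by
    rw [← hK]
    exact ⟨Module.finrank ℚ⟮ω⟯ K, (Module.finrank_mul_finrank ℚ ℚ⟮ω⟯ K).symm⟩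
  have hpos : 0 < Module.finrank ℚ ℚ⟮ω⟯ := Module.finrank_pos
  have h2 : Module.finrank ℚ ℚ⟮ω⟯ = 2 := by
    rcases (Nat.dvd_prime Nat.prime_two).mp hdvd with h | h
    · exact absurd h hne1
    · exact h
  have htop : ℚ⟮ω⟯ = ⊤ := by
    apply IntermediateField.toSubalgebra_injective
    apply Subalgebra.toSubmodule.injective
    apply Submodule.eq_top_of_finrank_eq
    rw [hK]; exact h2
  refine ⟨fun hn _ ↦ ⟨ω, ?_⟩, fun x ↦ ?_⟩
  · rw [Set.mem_singleton_iff] at hn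
    subst hn
    exact_mod_cast hprim
  have hx : x ∈ Algebra.adjoin ℚ {ω} := by
    rw [← IntermediateField.adjoin_simple_toSubalgebra_of_isAlgebraic hint.isAlgebraic]
    rw [htop]
    trivial
  refine Algebra.adjoin_mono ?_ hx
  rintro y rfl
  exact ⟨3, by simp, by norm_num, hω3⟩


theorem mordell_classify {K : Type*} [Field K] [NumberField K]
    (hflt : ∀ {x y : K}, x ≠ 0 → y ≠ 0 → x ^ 3 + y ^ 3 = 1 → False)
    {s : K} (hs : s ^ 2 = -3) {x y : K} (hxy : y ^ 2 = x ^ 3 + 16) :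
    (x = 0 ∧ (y = 4 ∨ y = -4)) ∨
      ((x = -4 ∨ x = 2 - 2 * s ∨ x = 2 + 2 * s) ∧ (y = 4 * s ∨ y = -(4 * s))) := by
  have hs0 : s ≠ 0 := fun h ↦ by rw [h] at hs; norm_num at hs
  by_cases hx0 : x = 0
  · left
    refine ⟨hx0, ?_⟩
    have h0 : (y - 4) * (y + 4) = 0 := by rw [hx0] at hxy; linear_combination hxy
    rcases mul_eq_zero.mp h0 with h | h
    · exact Or.inl (by linear_combination h)
    · exact Or.inr (by linear_combination h)
  · right
    set u : K := -3 * x with hu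
    set v : K := -3 * s * y with hv
    have hu0 : u ≠ 0 := by rw [hu]; exact mul_ne_zero (by norm_num) hx0
    have huv : v ^ 2 = u ^ 3 - 432 := by
      rw [hu, hv]
      linear_combination (9 * y ^ 2) * hs - 27 * hxy
    set X : K := (36 + v) / (6 * u) with hX
    set Y : K := (36 - v) / (6 * u) with hY
    have h6u : 6 * u ≠ 0 := mul_ne_zero (by norm_num) hu0
    have hXY : X ^ 3 + Y ^ 3 = 1 := by
      rw [hX, hY]
      field_simp
      linear_combination 216 * huv
    have hzero : X = 0 ∨ Y = 0 := by
      by_contra h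
      push_neg at h
      exact hflt h.1 h.2 hXY
    have hcase : v = -36 ∨ v = 36 := by
      rcases hzero with h | h
      · rw [hX] at h
        rcases div_eq_zero_iff.mp h with h' | h'
        · left; linear_combination h'
        · exact absurd h' h6u
      · rw [hY] at h
        rcases div_eq_zero_iff.mp h with h' | h'
        · right; linear_combination -h'
        · exact absurd h' h6u
    have hu3 : u ^ 3 = 1728 := by
      rcases hcase with h | h <;> (rw [h] at huv; norm_num at huv; linear_combination -huv)
    have hx3' : x ^ 3 = -64 := by
      have h27 : (-3 * x) ^ 3 = 1728 := by rw [← hu3, hu]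
      linear_combination (-1 / 27 : K) * h27
    constructor
    · have hfac : (x + 4) * ((x - (2 - 2 * s)) * (x - (2 + 2 * s))) = 0 := by
        linear_combination hx3' - 4 * (x + 4) * hs
      rcases mul_eq_zero.mp hfac with h | h
      · exact Or.inl (by linear_combination h)
      · rcases mul_eq_zero.mp h with h' | h'
        · exact Or.inr (Or.inl (by linear_combination h'))
        · exact Or.inr (Or.inr (by linear_combination h'))
    · have hy4 : (y - 4 * s) * (y + 4 * s) = 0 := by
        linear_combination hxy + hx3' - 16 * hs
      rcases mul_eq_zero.mp hy4 with h | h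
      · exact Or.inl (by linear_combination h)
      · exact Or.inr (by linear_combination h)


namespace CurveEAux

open WeierstrassCurve.Affine WeierstrassCurve.Affine.Point

variable {K : Type*} [Field K]

@[simp] lemma curveE_a₁ : (curveE K).a₁ = 0 := rfl
@[simp] lemma curveE_a₂ : (curveE K).a₂ = 0 := rfl
@[simp] lemma curveE_a₃ : (curveE K).a₃ = 0 := rfl
@[simp] lemma curveE_a₄ : (curveE K).a₄ = 0 := rfl
@[simp] lemma curveE_a₆ : (curveE K).a₆ = 16 := rfl

lemma some_eq_some {R : Type*} [CommRing R] {W : WeierstrassCurve.Affine R} {x₁ y₁ x₂ y₂ : R}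
    (h₁ : W.Nonsingular x₁ y₁) (h₂ : W.Nonsingular x₂ y₂) (hx : x₁ = x₂) (hy : y₁ = y₂) :
    Point.some _ _ h₁ = Point.some _ _ h₂ := by
  subst hx; subst hy; rfl

lemma eqn_iff {x y : K} : (curveE K).toAffine.Equation x y ↔ y ^ 2 = x ^ 3 + 16 := by
  rw [WeierstrassCurve.Affine.equation_iff]
  simp only [curveE_a₁, curveE_a₂, curveE_a₃, curveE_a₄, curveE_a₆]
  constructor <;> intro h <;> linear_combination h

lemma negY_eq (x y : K) : (curveE K).toAffine.negY x y = -y := by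
  rw [WeierstrassCurve.Affine.negY]
  simp

lemma nonsing [NumberField K] {x y : K} (h : y ^ 2 = x ^ 3 + 16) (hy : y ≠ 0) :
    (curveE K).toAffine.Nonsingular x y := by
  rw [WeierstrassCurve.Affine.nonsingular_iff]
  refine ⟨eqn_iff.mpr h, Or.inr ?_⟩
  rw [show -y - (curveE K).toAffine.a₁ * x - (curveE K).toAffine.a₃ = -y by simp]
  intro hE
  apply hy
  have h2 : (2 : K) * y = 0 := by linear_combination hE
  rcases mul_eq_zero.mp h2 with h' | h'
  · norm_num at h'
  · exact h'

lemma addX_eq (x₁ x₂ L : K) :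
    (curveE K).toAffine.addX x₁ x₂ L = L ^ 2 - x₁ - x₂ := by
  rw [WeierstrassCurve.Affine.addX]
  simp

lemma addY_eq (x₁ x₂ y₁ L : K) :
    (curveE K).toAffine.addY x₁ x₂ y₁ L = -(L * ((L ^ 2 - x₁ - x₂) - x₁) + y₁) := by
  rw [WeierstrassCurve.Affine.addY, WeierstrassCurve.Affine.negAddY, negY_eq, addX_eq]

end CurveEAux

section Main

variable {K : Type*} [Field K] [NumberField K]

open CurveEAux WeierstrassCurve.Affine WeierstrassCurve.Affine.Point

open Classical in
theorem curveE_equiv {s : K} (hs : s ^ 2 = -3)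
    (hclass : ∀ {x y : K}, y ^ 2 = x ^ 3 + 16 → (x = 0 ∧ (y = 4 ∨ y = -4)) ∨
      ((x = -4 ∨ x = 2 - 2 * s ∨ x = 2 + 2 * s) ∧ (y = 4 * s ∨ y = -(4 * s)))) :
    Nonempty (AddCommGroup.torsion (curveE K).toAffine.Point ≃+ ZMod 3 × ZMod 3) := by
  classical
  have hs0 : s ≠ 0 := fun h ↦ by rw [h] at hs; norm_num at hs
  have h4s : (4 : K) * s ≠ 0 := mul_ne_zero (by norm_num) hs0
  -- the eight affine points
  have h1 : (curveE K).toAffine.Nonsingular 0 4 := nonsing (by norm_num) (by norm_num)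
  have h1' : (curveE K).toAffine.Nonsingular 0 (-4) := nonsing (by norm_num) (by norm_num)
  have h2 : (curveE K).toAffine.Nonsingular (-4) (4 * s) :=
    nonsing (by linear_combination 16 * hs) h4s
  have h2' : (curveE K).toAffine.Nonsingular (-4) (-(4 * s)) :=
    nonsing (by linear_combination 16 * hs) (neg_ne_zero.mpr h4s)
  have hq : (curveE K).toAffine.Nonsingular (2 - 2 * s) (4 * s) :=
    nonsing (by linear_combination (8 * s - 8) * hs) h4s
  have hnq : (curveE K).toAffine.Nonsingular (2 - 2 * s) (-(4 * s)) :=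
    nonsing (by linear_combination (8 * s - 8) * hs) (neg_ne_zero.mpr h4s)
  have hq' : (curveE K).toAffine.Nonsingular (2 + 2 * s) (-(4 * s)) :=
    nonsing (by linear_combination (-8 * s - 8) * hs) (neg_ne_zero.mpr h4s)
  have hnq' : (curveE K).toAffine.Nonsingular (2 + 2 * s) (4 * s) :=
    nonsing (by linear_combination (-8 * s - 8) * hs) h4s
  set G := (curveE K).toAffine.Point with hG
  set P₁ : G := Point.some _ _ h1 with hP₁
  set P₂ : G := Point.some _ _ h2 with hP₂
  -- negation formulas
  have hneg1 : -Point.some _ _ h1 = Point.some _ _ h1' := by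
    rw [neg_some]; exact some_eq_some _ _ rfl (by rw [negY_eq])
  have hneg2 : -Point.some _ _ h2 = Point.some _ _ h2' := by
    rw [neg_some]; exact some_eq_some _ _ rfl (by rw [negY_eq])
  have hnegq : -Point.some _ _ hq = Point.some _ _ hnq := by
    rw [neg_some]; exact some_eq_some _ _ rfl (by rw [negY_eq])
  have hnegq' : -Point.some _ _ hq' = Point.some _ _ hnq' := by
    rw [neg_some]; exact some_eq_some _ _ rfl (by rw [negY_eq, neg_neg])
  -- addition formulas
  have hx12 : (0 : K) ≠ -4 := by norm_num
  have A1 : Point.some _ _ h1 + Point.some _ _ h2 = Point.some _ _ hq := by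
    rw [add_of_X_ne hx12]
    have hL : (curveE K).toAffine.slope 0 (-4) 4 (4 * s) = 1 - s := by
      rw [slope_of_X_ne hx12, div_eq_iff (by norm_num : (0 : K) - (-4) ≠ 0)]
      ring
    refine some_eq_some _ _ ?_ ?_
    · rw [hL, addX_eq]; linear_combination hs
    · rw [hL, addY_eq]; linear_combination (s - 3) * hs
  have A2 : Point.some _ _ h1 + Point.some _ _ h2' = Point.some _ _ hq' := by
    rw [add_of_X_ne hx12]
    have hL : (curveE K).toAffine.slope 0 (-4) 4 (-(4 * s)) = 1 + s := by
      rw [slope_of_X_ne hx12, div_eq_iff (by norm_num : (0 : K) - (-4) ≠ 0)]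
      ring
    refine some_eq_some _ _ ?_ ?_
    · rw [hL, addX_eq]; linear_combination hs
    · rw [hL, addY_eq]; linear_combination (-(s + 3)) * hs
  have hy1 : (4 : K) ≠ (curveE K).toAffine.negY 0 4 := by
    rw [negY_eq]; norm_num
  have A3 : Point.some _ _ h1 + Point.some _ _ h1 = Point.some _ _ h1' := by
    rw [add_self_of_Y_ne hy1]
    have hL : (curveE K).toAffine.slope 0 0 4 4 = 0 := by
      rw [slope_of_Y_ne rfl hy1]
      simp
    refine some_eq_some _ _ ?_ ?_
    · rw [hL, addX_eq]; ring
    · rw [hL, addY_eq]; ring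
  have hy2 : (4 : K) * s ≠ (curveE K).toAffine.negY (-4) (4 * s) := by
    rw [negY_eq]
    intro h
    exact (mul_ne_zero (by norm_num : (8 : K) ≠ 0) hs0) (by linear_combination h)
  have A4 : Point.some _ _ h2 + Point.some _ _ h2 = Point.some _ _ h2' := by
    rw [add_self_of_Y_ne hy2]
    have hL : (curveE K).toAffine.slope (-4) (-4) (4 * s) (4 * s) = -2 * s := by
      rw [slope_of_Y_ne rfl hy2, negY_eq]
      simp only [curveE_a₁, curveE_a₂, curveE_a₄]
      rw [div_eq_iff (by
        intro h
        exact (mul_ne_zero (by norm_num : (8 : K) ≠ 0) hs0) (by linear_combination h))]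
      linear_combination 16 * hs
    refine some_eq_some _ _ ?_ ?_
    · rw [hL, addX_eq]; linear_combination 4 * hs
    · rw [hL, addY_eq]; linear_combination 8 * s * hs
  -- three-torsion
  have h3P₁ : (3 : ℤ) • P₁ = 0 := by
    rw [show (3 : ℤ) = 2 + 1 by norm_num, add_zsmul, two_zsmul, one_zsmul, hP₁, A3]
    rw [← hneg1]
    exact neg_add_cancel _
  have h3P₂ : (3 : ℤ) • P₂ = 0 := by
    rw [show (3 : ℤ) = 2 + 1 by norm_num, add_zsmul, two_zsmul, one_zsmul, hP₂, A4]
    rw [← hneg2]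
    exact neg_add_cancel _
  -- the homomorphism
  set ψ₁ : ZMod 3 →+ G := ZMod.lift 3 ⟨zmultiplesHom G P₁, h3P₁⟩ with hψ₁
  set ψ₂ : ZMod 3 →+ G := ZMod.lift 3 ⟨zmultiplesHom G P₂, h3P₂⟩ with hψ₂
  set φ : ZMod 3 × ZMod 3 →+ G := ψ₁.coprod ψ₂ with hφ
  have hψval : ∀ (P : G) (h3P : (3 : ℤ) • P = 0),
      (ZMod.lift 3 ⟨zmultiplesHom G P, h3P⟩ : ZMod 3 →+ G) 0 = 0 ∧
      (ZMod.lift 3 ⟨zmultiplesHom G P, h3P⟩ : ZMod 3 →+ G) 1 = P ∧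
      (ZMod.lift 3 ⟨zmultiplesHom G P, h3P⟩ : ZMod 3 →+ G) 2 = P + P := by
    intro P h3P
    refine ⟨map_zero _, ?_, ?_⟩
    · rw [show (1 : ZMod 3) = ((1 : ℤ) : ZMod 3) by norm_num, ZMod.lift_coe]
      exact one_zsmul P
    · rw [show (2 : ZMod 3) = ((2 : ℤ) : ZMod 3) by norm_num, ZMod.lift_coe]
      exact two_zsmul P
  obtain ⟨e10, e11, e12⟩ := hψval P₁ h3P₁
  obtain ⟨e20, e21, e22⟩ := hψval P₂ h3P₂
  have hφval : ∀ a b : ZMod 3, φ (a, b) = ψ₁ a + ψ₂ b := fun a b ↦ rfl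
  -- φ values on all nine inputs
  have v00 : φ (0, 0) = 0 := by rw [hφval, e10, e20, add_zero]
  have v10 : φ (1, 0) = Point.some _ _ h1 := by rw [hφval, e11, e20, add_zero, hP₁]
  have v20 : φ (2, 0) = Point.some _ _ h1' := by rw [hφval, e12, e20, add_zero, hP₁, A3]
  have v01 : φ (0, 1) = Point.some _ _ h2 := by rw [hφval, e10, e21, zero_add, hP₂]
  have v02 : φ (0, 2) = Point.some _ _ h2' := by rw [hφval, e10, e22, zero_add, hP₂, A4]
  have v11 : φ (1, 1) = Point.some _ _ hq := by rw [hφval, e11, e21, hP₁, hP₂, A1]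
  have A5 : Point.some _ _ h1' + Point.some _ _ h2 = Point.some _ _ hnq' := by
    rw [add_of_X_ne hx12]
    have hL : (curveE K).toAffine.slope 0 (-4) (-4) (4 * s) = -1 - s := by
      rw [slope_of_X_ne hx12, div_eq_iff (by norm_num : (0 : K) - (-4) ≠ 0)]
      ring
    refine some_eq_some _ _ ?_ ?_
    · rw [hL, addX_eq]; linear_combination hs
    · rw [hL, addY_eq]; linear_combination (s + 3) * hs
  have A6 : Point.some _ _ h1' + Point.some _ _ h2' = Point.some _ _ hnq := by
    rw [add_of_X_ne hx12]
    have hL : (curveE K).toAffine.slope 0 (-4) (-4) (-(4 * s)) = -1 + s := by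
      rw [slope_of_X_ne hx12, div_eq_iff (by norm_num : (0 : K) - (-4) ≠ 0)]
      ring
    refine some_eq_some _ _ ?_ ?_
    · rw [hL, addX_eq]; linear_combination hs
    · rw [hL, addY_eq]; linear_combination (3 - s) * hs
  have v12 : φ (1, 2) = Point.some _ _ hq' := by
    rw [hφval, e11, e22, A4, hP₁, A2]
  have v21 : φ (2, 1) = Point.some _ _ hnq' := by
    rw [hφval, e12, e21, hP₁, A3, hP₂, A5]
  have v22 : φ (2, 2) = Point.some _ _ hnq := by
    rw [hφval, e12, e22, hP₁, A3, hP₂, A4, A6]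
  -- injectivity
  have hcases : ∀ a : ZMod 3, a = 0 ∨ a = 1 ∨ a = 2 := by decide
  have hinj : Function.Injective φ := by
    rw [injective_iff_map_eq_zero]
    rintro ⟨a, b⟩ hab
    rcases hcases a with rfl | rfl | rfl <;> rcases hcases b with rfl | rfl | rfl
    · rfl
    · rw [v01] at hab; exact absurd hab (some_ne_zero h2)
    · rw [v02] at hab; exact absurd hab (some_ne_zero h2')
    · rw [v10] at hab; exact absurd hab (some_ne_zero h1)
    · rw [v11] at hab; exact absurd hab (some_ne_zero hq)
    · rw [v12] at hab; exact absurd hab (some_ne_zero hq')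
    · rw [v20] at hab; exact absurd hab (some_ne_zero h1')
    · rw [v21] at hab; exact absurd hab (some_ne_zero hnq')
    · rw [v22] at hab; exact absurd hab (some_ne_zero hnq)
  -- surjectivity
  have hsurj : Function.Surjective φ := by
    rintro (_ | @⟨x, y, h⟩)
    · exact ⟨(0, 0), v00⟩
    have hxy : y ^ 2 = x ^ 3 + 16 := eqn_iff.mp h.left
    rcases hclass hxy with ⟨rfl, rfl | rfl⟩ | ⟨rfl | rfl | rfl, rfl | rfl⟩
    · exact ⟨(1, 0), by rw [v10]⟩
    · exact ⟨(2, 0), by rw [v20]⟩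
    · exact ⟨(0, 1), by rw [v01]⟩
    · exact ⟨(0, 2), by rw [v02]⟩
    · exact ⟨(1, 1), by rw [v11]⟩
    · exact ⟨(2, 2), by rw [v22]⟩
    · exact ⟨(2, 1), by rw [v21]⟩
    · exact ⟨(1, 2), by rw [v12]⟩
  -- torsion is everything
  have h3all : ∀ z : ZMod 3 × ZMod 3, 3 • z = 0 := by decide
  have htor : AddCommGroup.torsion G = ⊤ := by
    rw [eq_top_iff]
    intro P _
    obtain ⟨z, rfl⟩ := hsurj P
    refine isOfFinAddOrder_iff_nsmul_eq_zero.mpr ⟨3, by norm_num, ?_⟩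
    rw [← map_nsmul, h3all z, _root_.map_zero]
  exact ⟨((AddEquiv.addSubgroupCongr htor).trans AddSubgroup.topEquiv).trans
    (AddEquiv.ofBijective φ ⟨hinj, hsurj⟩).symm⟩

end Main


open Classical in
/-- Let `K` be a quadratic field in which `−3` is a square (so `K = ℚ(√−3)`) and let
`E` be the elliptic curve `y² = x³ + 16` over `K`.  Then `E(K)_tors` is isomorphic to
`ℤ/3ℤ ⊕ ℤ/3ℤ`. -/
theorem torsion_x_cubed_plus_sixteen_sqrt_neg_three (K : Type*) [Field K]
    [NumberField K] (hK : Module.finrank ℚ K = 2) (h3 : ∃ s : K, s ^ 2 = -3) :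
    Nonempty (AddCommGroup.torsion (curveE K).toAffine.Point ≃+ ZMod 3 × ZMod 3) := by
  obtain ⟨s, hs⟩ := h3
  haveI : IsCyclotomicExtension {3} ℚ K := cyclo_of_sqrt_neg_three hK ⟨s, hs⟩
  exact curveE_equiv hs fun {x y} hxy ↦
    mordell_classify (fun {x y} hx hy H ↦
      flt3K (fun {ζ} hζ ↦ fltThreeGen' hζ) hx hy H) hs hxy
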